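/- Let Λ be a finite group with a bijection ‖·‖ : Λ → {0,…,ℓ−1}, and let G = (⊕_ℤ Λ) ⋊ ℤ with 𝔫(μ, k) = Σ_{n ≥ k} ‖μ_n‖ ℓ^{n−k}. For any g ∈ G, the map λ ↦ 𝔫(g t⁻¹ [λ]₀) is a bijection from Λ onto the set of integers {ℓ·𝔫(g), ℓ·𝔫(g)+1, …, ℓ·𝔫(g)+ℓ−1}. -/

import Mathlib

/-- The subgroup of finitely supported functions `ℤ → Λ`, i.e. `⊕_ℤ Λ`. -/
def FinSupp (Λ : Type*) [Group Λ] : Subgroup (ℤ → Λ) where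
  carrier := {f | (Function.mulSupport f).Finite}
  one_mem' := by simpa using Set.finite_empty
  mul_mem' := fun hf hg => ((hf.union hg).subset (Function.mulSupport_mul _ _))
  inv_mem' := fun hf => by simpa using hf

/-- The shift automorphism of `⊕_ℤ Λ` by `k`: `(shift k f) n = f (n - k)`. -/
def shiftAut (Λ : Type*) [Group Λ] (k : ℤ) : MulAut (FinSupp Λ) where
  toFun f := ⟨fun n => f.val (n - k), (f.prop.image (· + k)).subset (by
    intro n hn
    exact ⟨n - k, hn, by ring⟩)⟩
  invFun f := ⟨fun n => f.val (n + k), (f.prop.image (· - k)).subset (by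
    intro n hn
    exact ⟨n + k, hn, by ring⟩)⟩
  left_inv f := by ext n; simp
  right_inv f := by ext n; simp
  map_mul' f g := rfl

/-- The lamplighter group `G = (⊕_ℤ Λ) ⋊ ℤ`, with the generator of `ℤ` acting by the
shift `t [λ]_i t⁻¹ = [λ]_{i+1}`. -/
abbrev Lamp (Λ : Type*) [Group Λ] :=
  SemidirectProduct (FinSupp Λ) (Multiplicative ℤ) (zpowersHom _ (shiftAut Λ 1))

/-- The generator `t` of the `ℤ` factor of the lamplighter group. -/
def tGen (Λ : Type*) [Group Λ] : Lamp Λ :=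
  SemidirectProduct.inr (Multiplicative.ofAdd 1)

/-- `[λ]_i`: the element of `⊕_ℤ Λ` supported at coordinate `i` with value `λ`. -/
def lam {Λ : Type*} [Group Λ] (i : ℤ) (x : Λ) : FinSupp Λ :=
  ⟨fun n => if n = i then x else 1, (Set.finite_singleton i).subset (by
    intro n hn
    by_contra h
    exact hn (if_neg h))⟩

/-- `𝔫(μ tᵏ) = Σ_{n ≥ k, n ∈ supp μ} ‖μ_n‖ ℓ^{n−k}`. -/
noncomputable def nval {Λ : Type*} [Group Λ] (norm : Λ → ℕ) (ℓ : ℕ) (g : Lamp Λ) : ℕ :=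
  ∑ n ∈ (g.left.prop.toFinset.filter (fun n => Multiplicative.toAdd g.right ≤ n)),
    norm (g.left.val n) * ℓ ^ (n - Multiplicative.toAdd g.right).toNat

lemma shiftAut_mul {Λ : Type*} [Group Λ] (a b : ℤ) :
    shiftAut Λ a * shiftAut Λ b = shiftAut Λ (a + b) := by
  ext f n
  show (f : ℤ → Λ) (n - a - b) = (f : ℤ → Λ) (n - (a + b))
  ring_nf

lemma shiftAut_zero {Λ : Type*} [Group Λ] : shiftAut Λ 0 = 1 := by
  ext f n
  show (f : ℤ → Λ) (n - 0) = (f : ℤ → Λ) n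
  ring_nf

lemma shiftAut_inv {Λ : Type*} [Group Λ] (a : ℤ) : (shiftAut Λ a)⁻¹ = shiftAut Λ (-a) := by
  rw [eq_comm, eq_inv_iff_mul_eq_one, shiftAut_mul]
  simpa using shiftAut_zero

lemma shiftAut_zpow {Λ : Type*} [Group Λ] (m : ℤ) : (shiftAut Λ 1) ^ m = shiftAut Λ m := by
  induction m using Int.induction_on with
  | zero => simpa using shiftAut_zero.symm
  | succ k ih => rw [zpow_add_one, ih, shiftAut_mul]
  | pred k ih => rw [zpow_sub_one, ih, shiftAut_inv, shiftAut_mul, ← sub_eq_add_neg]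

section comp
variable {Λ : Type*} [Group Λ] (g : Lamp Λ) (x : Λ)

lemma h_right : Multiplicative.toAdd (g * (tGen Λ)⁻¹ * SemidirectProduct.inl (lam 0 x)).right
    = Multiplicative.toAdd g.right - 1 := by
  simp [tGen, sub_eq_add_neg]

lemma h_left_val (n : ℤ) :
    ((g * (tGen Λ)⁻¹ * SemidirectProduct.inl (lam 0 x)).left : ℤ → Λ) n =
      if n = Multiplicative.toAdd g.right - 1 then g.left.val n * x else g.left.val n := by
  have : (g * (tGen Λ)⁻¹ * SemidirectProduct.inl (lam 0 x)).left
      = g.left * (shiftAut Λ (Multiplicative.toAdd g.right - 1)) (lam 0 x) := by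
    simp [tGen, zpowersHom_apply, shiftAut_zpow, sub_eq_add_neg]
  rw [this]
  show g.left.val n * ((shiftAut Λ _) (lam 0 x)).val n = _
  simp only [shiftAut, lam, MulEquiv.coe_mk, Equiv.coe_fn_mk]
  by_cases h : n = Multiplicative.toAdd g.right - 1
  · rw [if_pos h, if_pos (by omega)]
  · rw [if_neg h, if_neg (by omega), mul_one]

end comp

lemma nval_key {Λ : Type*} [Group Λ] [Fintype Λ] {ℓ : ℕ} (e : Λ ≃ Fin ℓ)
    (he : (e 1 : ℕ) = 0) (g : Lamp Λ) (x : Λ) :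
    nval (fun y => (e y : ℕ)) ℓ (g * (tGen Λ)⁻¹ * SemidirectProduct.inl (lam 0 x)) =
      ℓ * nval (fun y => (e y : ℕ)) ℓ g
        + (e (g.left.val (Multiplicative.toAdd g.right - 1) * x) : ℕ) := by
  set k := Multiplicative.toAdd g.right with hk
  set h := g * (tGen Λ)⁻¹ * SemidirectProduct.inl (lam 0 x) with hh
  set F : ℤ → ℕ := fun n => (e ((h.left : ℤ → Λ) n) : ℕ) * ℓ ^ (n - (k - 1)).toNat with hF
  have hrt : Multiplicative.toAdd h.right = k - 1 := h_right g x
  have hlv : ∀ n : ℤ, (h.left : ℤ → Λ) n =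
      if n = k - 1 then g.left.val n * x else g.left.val n := h_left_val g x
  set T : Finset ℤ := insert (k - 1) (g.left.prop.toFinset.filter (fun n => k ≤ n)) with hT
  have hnh : nval (fun y => (e y : ℕ)) ℓ h = ∑ n ∈ T, F n := by
    rw [nval]
    simp only [hrt, ← hF]
    refine Finset.sum_subset ?_ ?_
    · intro n hn
      simp only [Finset.mem_filter, Set.Finite.mem_toFinset] at hn
      rcases eq_or_ne n (k - 1) with h1 | h1
      · exact h1 ▸ Finset.mem_insert_self _ _
      · refine Finset.mem_insert_of_mem (Finset.mem_filter.mpr ⟨?_, by omega⟩)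
        have := (Set.Finite.mem_toFinset _).mp hn.1
        refine (Set.Finite.mem_toFinset _).mpr ?_
        intro hc
        exact this (by rw [Function.mem_mulSupport] at *; rw [hlv n, if_neg h1] at this ⊢; exact hc)
    · intro n hn hn2
      have h1 : (h.left : ℤ → Λ) n = 1 := by
        by_contra hc
        refine hn2 (Finset.mem_filter.mpr ⟨Set.Finite.mem_toFinset _ |>.mpr hc, ?_⟩)
        rcases Finset.mem_insert.mp hn with h2 | h2
        · omega
        · have := (Finset.mem_filter.mp h2).2; omega
      simp [hF, h1, he]
  have hknotmem : (k - 1) ∉ g.left.prop.toFinset.filter (fun n => k ≤ n) := by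
    simp only [Finset.mem_filter, not_and]
    intro _; omega
  rw [hnh, hT, Finset.sum_insert hknotmem]
  have hF1 : F (k - 1) = (e (g.left.val (k - 1) * x) : ℕ) := by
    simp [hF, hlv (k - 1)]
  have hFn : ∀ n ∈ g.left.prop.toFinset.filter (fun n => k ≤ n),
      F n = ℓ * ((e (g.left.val n) : ℕ) * ℓ ^ (n - k).toNat) := by
    intro n hn
    have hkn : k ≤ n := (Finset.mem_filter.mp hn).2
    have h1 : (n - (k - 1)).toNat = (n - k).toNat + 1 := by omega
    rw [hF]
    simp only [hlv n, if_neg (by omega : ¬ n = k - 1), h1, pow_succ]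
    ring
  rw [Finset.sum_congr rfl hFn, ← Finset.mul_sum, hF1, nval, ← hk]
  ring

/-- For any `g ∈ G`, the map `λ ↦ 𝔫(g t⁻¹ [λ]₀)` is a bijection from `Λ`
onto `{ℓ·𝔫(g), …, ℓ·𝔫(g) + ℓ − 1}`. -/
theorem nval_roleModel_bijOn {Λ : Type*} [Group Λ] [Fintype Λ] {ℓ : ℕ} (e : Λ ≃ Fin ℓ)
    (he : (e 1 : ℕ) = 0) (g : Lamp Λ) :
    Set.BijOn
      (fun x : Λ => nval (fun y => (e y : ℕ)) ℓ (g * (tGen Λ)⁻¹ * SemidirectProduct.inl (lam 0 x)))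
      Set.univ
      (Set.Ico (ℓ * nval (fun y => (e y : ℕ)) ℓ g) (ℓ * nval (fun y => (e y : ℕ)) ℓ g + ℓ)) := by
  set N := nval (fun y => (e y : ℕ)) ℓ g with hN
  set c := g.left.val (Multiplicative.toAdd g.right - 1) with hc
  have key : ∀ x : Λ, nval (fun y => (e y : ℕ)) ℓ
      (g * (tGen Λ)⁻¹ * SemidirectProduct.inl (lam 0 x)) = ℓ * N + (e (c * x) : ℕ) :=
    fun x => nval_key e he g x
  refine ⟨fun x _ => ?_, fun a _ b _ hab => ?_, fun m hm => ?_⟩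
  · simp only [key]
    exact ⟨Nat.le_add_right _ _, by have := (e (c * x)).isLt; omega⟩
  · simp only [key] at hab
    have h1 : (e (c * a) : ℕ) = (e (c * b) : ℕ) := by omega
    have h2 : e (c * a) = e (c * b) := Fin.val_injective h1
    exact mul_left_cancel (e.injective h2)
  · obtain ⟨h1, h2⟩ := hm
    refine ⟨c⁻¹ * e.symm ⟨m - ℓ * N, by omega⟩, Set.mem_univ _, ?_⟩
    simp only [key, mul_inv_cancel_left, Equiv.apply_symm_apply]
    omega
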